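/- For every u₁ > 0 and every k with 2 ≤ k ≤ n, the functions U_k are differentiable on (0, ∞) and (U_k' − U_{k−1}')(u₁) = h²·((1/2)·g₁'(u₁) + Σ_{j=2}^{k−1} g₁'(U_j(u₁))·U_j'(u₁)) holds; in particular (U_k' − U_{k−1}')(u₁) > 0. -/

import Mathlib

open Finset

noncomputable def U (g1 : ℝ → ℝ) (h : ℝ) : ℕ → ℝ → ℝ
  | 0, u => u
  | 1, u => u
  | 2, u => u + h ^ 2 / 2 * g1 u
  | k + 3, u => 2 * U g1 h (k + 2) u - U g1 h (k + 1) u + h ^ 2 * g1 (U g1 h (k + 2) u)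

noncomputable def Ud (g1 : ℝ → ℝ) (h : ℝ) : ℕ → ℝ → ℝ
  | 0, _ => 1
  | 1, _ => 1
  | 2, x => 1 + h ^ 2 / 2 * deriv g1 x
  | k + 3, x => 2 * Ud g1 h (k + 2) x - Ud g1 h (k + 1) x
      + h ^ 2 * (deriv g1 (U g1 h (k + 2) x) * Ud g1 h (k + 2) x)

lemma U_hasDerivAt (g1 : ℝ → ℝ) (h : ℝ) (hg : Differentiable ℝ g1) (j : ℕ) (x : ℝ) :
    HasDerivAt (U g1 h j) (Ud g1 h j x) x := by
  induction j using Nat.strong_induction_on with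
  | _ j IH =>
    match j with
    | 0 =>
      have h0 : U g1 h 0 = fun u => u := by funext u; simp [U]
      rw [h0]
      simpa [Ud] using hasDerivAt_id' x
    | 1 =>
      have h0 : U g1 h 1 = fun u => u := by funext u; simp [U]
      rw [h0]
      simpa [Ud] using hasDerivAt_id' x
    | 2 =>
      have h0 : U g1 h 2 = fun u => u + h ^ 2 / 2 * g1 u := by funext u; simp [U]
      rw [h0]
      have : HasDerivAt (fun u => u + h ^ 2 / 2 * g1 u)
          (1 + h ^ 2 / 2 * deriv g1 x) x :=
        (hasDerivAt_id x).add (((hg x).hasDerivAt).const_mul (h ^ 2 / 2))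
      simpa [Ud] using this
    | (m + 3) =>
      have h0 : U g1 h (m + 3) = fun u =>
          2 * U g1 h (m + 2) u - U g1 h (m + 1) u + h ^ 2 * g1 (U g1 h (m + 2) u) := by
        funext u; simp [U]
      rw [h0]
      have hcomp : HasDerivAt (fun u => g1 (U g1 h (m + 2) u))
          (deriv g1 (U g1 h (m + 2) x) * Ud g1 h (m + 2) x) x :=
        ((hg _).hasDerivAt).comp x (IH (m + 2) (by omega))
      have : HasDerivAt (fun u =>
          2 * U g1 h (m + 2) u - U g1 h (m + 1) u + h ^ 2 * g1 (U g1 h (m + 2) u))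
          (2 * Ud g1 h (m + 2) x - Ud g1 h (m + 1) x
            + h ^ 2 * (deriv g1 (U g1 h (m + 2) x) * Ud g1 h (m + 2) x)) x :=
        (((IH (m + 2) (by omega)).const_mul 2).sub (IH (m + 1) (by omega))).add
          (hcomp.const_mul (h ^ 2))
      simpa [Ud] using this

theorem stmt2
    (g1 g2 : ℝ → ℝ)
    (hg1C : ContDiff ℝ 3 g1) (hg2C : ContDiff ℝ 3 g2)
    (hg1A : AnalyticAt ℝ g1 0) (hg2A : AnalyticAt ℝ g2 0)
    (hg10 : g1 0 = 0) (hg20 : g2 0 = 0)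
    (hg1d1 : ∀ x > 0, 0 < deriv g1 x) (hg2d1 : ∀ x > 0, 0 < deriv g2 x)
    (hg1d2 : ∀ x > 0, 0 < iteratedDeriv 2 g1 x) (hg2d2 : ∀ x > 0, 0 < iteratedDeriv 2 g2 x)
    (hg1d3 : ∀ x > 0, 0 ≤ iteratedDeriv 3 g1 x) (hg2d3 : ∀ x > 0, 0 ≤ iteratedDeriv 3 g2 x)
    (n : ℕ) (hn : 2 ≤ n) (h : ℝ) (hh : h = 1 / ((n : ℝ) - 1))
    (u1 : ℝ) (hu1 : 0 < u1) (k : ℕ) (hk2 : 2 ≤ k) (hkn : k ≤ n) :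
    (∀ j, 1 ≤ j → j ≤ n → ∀ x > (0 : ℝ), DifferentiableAt ℝ (U g1 h j) x) ∧
    deriv (U g1 h k) u1 - deriv (U g1 h (k - 1)) u1 =
      h ^ 2 * (1 / 2 * deriv g1 u1 +
        ∑ j ∈ Finset.Icc 2 (k - 1), deriv g1 (U g1 h j u1) * deriv (U g1 h j) u1) ∧
    0 < deriv (U g1 h k) u1 - deriv (U g1 h (k - 1)) u1 := by
  have hg : Differentiable ℝ g1 := hg1C.differentiable (by norm_num)
  have hd : ∀ j x, deriv (U g1 h j) x = Ud g1 h j x :=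
    fun j x => (U_hasDerivAt g1 h hg j x).deriv
  have hdiffAt : ∀ j x, DifferentiableAt ℝ (U g1 h j) x :=
    fun j x => (U_hasDerivAt g1 h hg j x).differentiableAt
  have hn2 : (2 : ℝ) ≤ (n : ℝ) := by exact_mod_cast hn
  have hhpos : 0 < h := by rw [hh]; exact div_pos one_pos (by linarith)
  -- g1 positive on positives
  have hmono : StrictMonoOn g1 (Set.Ici 0) :=
    strictMonoOn_of_deriv_pos (convex_Ici 0) hg1C.continuous.continuousOn
      (by intro x hx; rw [interior_Ici] at hx; exact hg1d1 x hx)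
  have g1pos : ∀ x > (0 : ℝ), 0 < g1 x := by
    intro x hx
    have := hmono (Set.mem_Ici.mpr le_rfl) (Set.mem_Ici.mpr hx.le) hx
    rwa [hg10] at this
  -- values are positive and nondecreasing
  have Upos : ∀ k, 0 < U g1 h k u1 ∧ U g1 h k u1 ≤ U g1 h (k + 1) u1 := by
    have H : ∀ k, (0 < U g1 h k u1 ∧ U g1 h k u1 ≤ U g1 h (k + 1) u1) ∧
        (0 < U g1 h (k + 1) u1 ∧ U g1 h (k + 1) u1 ≤ U g1 h (k + 2) u1) := by
      intro k
      induction k with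
      | zero =>
        have h0 : U g1 h 0 u1 = u1 := by simp [U]
        have h1 : U g1 h 1 u1 = u1 := by simp [U]
        have h2 : U g1 h 2 u1 = u1 + h ^ 2 / 2 * g1 u1 := by simp [U]
        refine ⟨⟨by rw [h0]; exact hu1, by rw [h0, h1]⟩, ⟨by rw [h1]; exact hu1, ?_⟩⟩
        rw [h1, h2]
        nlinarith [g1pos u1 hu1, sq_nonneg h]
      | succ k IH =>
        refine ⟨IH.2, ?_⟩
        obtain ⟨hk10, hk12⟩ := IH.2
        have h2pos : 0 < U g1 h (k + 2) u1 := lt_of_lt_of_le hk10 hk12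
        have hrec : U g1 h (k + 3) u1 = 2 * U g1 h (k + 2) u1 - U g1 h (k + 1) u1
            + h ^ 2 * g1 (U g1 h (k + 2) u1) := by simp [U]
        have hgp := g1pos _ h2pos
        refine ⟨h2pos, ?_⟩
        have e1 : k + 1 + 1 = k + 2 := by omega
        have e2 : k + 1 + 2 = k + 3 := by omega
        rw [e1, e2, hrec]
        nlinarith [sq_nonneg h]
    exact fun k => (H k).1
  -- derivatives are positive and nondecreasing
  have Dpos : ∀ k, 0 < Ud g1 h k u1 ∧ Ud g1 h k u1 ≤ Ud g1 h (k + 1) u1 := by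
    have H : ∀ k, (0 < Ud g1 h k u1 ∧ Ud g1 h k u1 ≤ Ud g1 h (k + 1) u1) ∧
        (0 < Ud g1 h (k + 1) u1 ∧ Ud g1 h (k + 1) u1 ≤ Ud g1 h (k + 2) u1) := by
      intro k
      induction k with
      | zero =>
        have h0 : Ud g1 h 0 u1 = 1 := by simp [Ud]
        have h1 : Ud g1 h 1 u1 = 1 := by simp [Ud]
        have h2 : Ud g1 h 2 u1 = 1 + h ^ 2 / 2 * deriv g1 u1 := by simp [Ud]
        refine ⟨⟨by rw [h0]; norm_num, by rw [h0, h1]⟩, ⟨by rw [h1]; norm_num, ?_⟩⟩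
        rw [h1, h2]
        nlinarith [hg1d1 u1 hu1, sq_nonneg h]
      | succ k IH =>
        refine ⟨IH.2, ?_⟩
        obtain ⟨hk10, hk12⟩ := IH.2
        have h2pos : 0 < Ud g1 h (k + 2) u1 := lt_of_lt_of_le hk10 hk12
        have hrec : Ud g1 h (k + 3) u1 = 2 * Ud g1 h (k + 2) u1 - Ud g1 h (k + 1) u1
            + h ^ 2 * (deriv g1 (U g1 h (k + 2) u1) * Ud g1 h (k + 2) u1) := by simp [Ud]
        have hgp : 0 < deriv g1 (U g1 h (k + 2) u1) := hg1d1 _ (Upos (k + 2)).1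
        refine ⟨h2pos, ?_⟩
        have e1 : k + 1 + 1 = k + 2 := by omega
        have e2 : k + 1 + 2 = k + 3 := by omega
        rw [e1, e2, hrec]
        nlinarith [sq_nonneg h, mul_pos hgp h2pos]
    exact fun k => (H k).1
  -- the difference formula
  have formula : ∀ m : ℕ, Ud g1 h (m + 2) u1 - Ud g1 h (m + 1) u1 =
      h ^ 2 * (1 / 2 * deriv g1 u1 +
        ∑ j ∈ Finset.Icc 2 (m + 1), deriv g1 (U g1 h j u1) * Ud g1 h j u1) := by
    intro m
    induction m with
    | zero =>
      have he : Finset.Icc 2 1 = (∅ : Finset ℕ) := Finset.Icc_eq_empty (by omega)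
      simp [Ud, he]
      ring
    | succ m IH =>
      have e1 : m + 1 + 2 = m + 3 := by omega
      have e2 : m + 1 + 1 = m + 2 := by omega
      rw [e1, e2]
      have hrec : Ud g1 h (m + 3) u1 = 2 * Ud g1 h (m + 2) u1 - Ud g1 h (m + 1) u1
          + h ^ 2 * (deriv g1 (U g1 h (m + 2) u1) * Ud g1 h (m + 2) u1) := by simp [Ud]
      rw [hrec, show m + 2 = m + 1 + 1 from rfl,
        Finset.sum_Icc_succ_top (by omega : 2 ≤ m + 1 + 1)]
      linear_combination IH
  have main : deriv (U g1 h k) u1 - deriv (U g1 h (k - 1)) u1 =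
      h ^ 2 * (1 / 2 * deriv g1 u1 +
        ∑ j ∈ Finset.Icc 2 (k - 1), deriv g1 (U g1 h j u1) * deriv (U g1 h j) u1) := by
    have e2 : k - 2 + 2 = k := by omega
    have e1 : k - 2 + 1 = k - 1 := by omega
    have := formula (k - 2)
    rw [e2, e1] at this
    rw [hd, hd]
    simp only [hd]
    exact this
  refine ⟨fun j _ _ x _ => hdiffAt j x, main, ?_⟩
  rw [main]
  have hsum : 0 ≤ ∑ j ∈ Finset.Icc 2 (k - 1), deriv g1 (U g1 h j u1) * deriv (U g1 h j) u1 := by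
    refine Finset.sum_nonneg fun j _ => mul_nonneg (hg1d1 _ (Upos j).1).le ?_
    rw [hd]
    exact (Dpos j).1.le
  have := hg1d1 u1 hu1
  have hh2 : 0 < h ^ 2 := pow_pos hhpos 2
  nlinarith
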